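/- A continuous section s : X × X → PX of the path fibration π : PX → X × X (where π(γ) = (γ(0), γ(1)) and PX is the space of continuous paths in X with the compact-open topology) exists if and only if X is contractible. -/

import Mathlib

open Set unitInterval

/-- `U ⊆ X × X` admits a continuous motion planning rule: a continuous section over `U`
of the path fibration `π : PX → X × X`, `π(γ) = (γ(0), γ(1))`, where `PX = C(I, X)`
carries the compact-open topology. -/
def HasMotionPlanner (X : Type*) [TopologicalSpace X] (U : Set (X × X)) : Prop :=
  ∃ s : C(U, C(I, X)), ∀ p : U, (s p) 0 = (p : X × X).1 ∧ (s p) 1 = (p : X × X).2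

/-- A continuous section `s : X × X → PX` of the path fibration (where `π(γ) = (γ(0), γ(1))`
and `PX` is the space of continuous paths in `X` with the compact-open topology) exists
if and only if `X` is contractible. -/
theorem stmt_0 (X : Type*) [TopologicalSpace X] [PathConnectedSpace X] :
    (∃ s : C(X × X, C(I, X)), ∀ A B : X, (s (A, B)) 0 = A ∧ (s (A, B)) 1 = B) ↔
      ContractibleSpace X := by
  constructor
  · rintro ⟨s, hs⟩
    have x₀ : X := Nonempty.some inferInstance
    rw [contractible_iff_id_nullhomotopic]
    refine ⟨x₀, ⟨⟨⟨fun p => s (p.2, x₀) p.1, ?_⟩, ?_, ?_⟩⟩⟩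
    · exact continuous_eval.comp
        ((s.continuous.comp (continuous_snd.prodMk continuous_const)).prodMk continuous_fst)
    · intro x; exact (hs x x₀).1
    · intro x; exact (hs x x₀).2
  · intro h
    obtain ⟨x₀, ⟨H⟩⟩ := (contractible_iff_id_nullhomotopic X).mp h
    set hh : ℝ → X → X := fun r x => H (Set.projIcc (0:ℝ) 1 zero_le_one r, x) with hh_def
    have hcont : Continuous fun q : (ℝ × X) => hh q.1 q.2 :=
      H.continuous.comp ((continuous_projIcc.comp continuous_fst).prodMk continuous_snd)
    have hG : Continuous fun q : (X × X) × I =>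
        if (q.2 : ℝ) ≤ 1/2 then hh (2 * q.2) q.1.1 else hh (2 - 2 * q.2) q.1.2 := by
      apply Continuous.if_le
      · exact hcont.comp ((continuous_const.mul
          (continuous_subtype_val.comp continuous_snd)).prodMk
          (continuous_fst.fst))
      · exact hcont.comp ((continuous_const.sub (continuous_const.mul
          (continuous_subtype_val.comp continuous_snd))).prodMk
          (continuous_fst.snd))
      · exact continuous_subtype_val.comp continuous_snd
      · exact continuous_const
      · intro q hq
        have h1 : (2 : ℝ) * q.2 = 1 := by rw [hq]; norm_num
        have h2 : (2 : ℝ) - 2 * q.2 = 1 := by rw [hq]; norm_num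
        rw [h1, show (2:ℝ) - 1 = 1 by norm_num]
        have : Set.projIcc (0:ℝ) 1 zero_le_one 1 = (1 : I) := by
          simp [Set.projIcc, unitInterval]
        simp only [hh_def, this]
        rw [H.apply_one, H.apply_one]; rfl
    have hp0 : Set.projIcc (0:ℝ) 1 zero_le_one 0 = (0 : I) := by
      simp [Set.projIcc]
    refine ⟨(ContinuousMap.mk _ hG).curry, ?_⟩
    intro A B
    constructor
    · show (if ((0:I) : ℝ) ≤ 1/2 then hh (2 * ((0:I):ℝ)) A else hh (2 - 2 * ((0:I):ℝ)) B) = A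
      rw [if_pos (by norm_num [Icc.coe_zero])]
      simp only [hh_def, Icc.coe_zero, mul_zero, hp0]
      exact H.apply_zero A
    · show (if ((1:I) : ℝ) ≤ 1/2 then hh (2 * ((1:I):ℝ)) A else hh (2 - 2 * ((1:I):ℝ)) B) = B
      rw [if_neg (by norm_num [Icc.coe_one])]
      simp only [hh_def, Icc.coe_one, mul_one]
      norm_num [hp0]
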